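/- Fix a real number δ with 0 < δ ≤ 1 and an integer n ≥ 4. Let K be a δ-Lipschitz filling of the cycle graph C_n, fix vertices x, y of C_n with d_{C_n}(x,y) = ⌊n/2⌋, and let L and R denote the two connected components of C_n − x − y. Then every set S ⊆ V(K)\{x,y} that separates L from R in K − x − y satisfies |S| ≥ δ·⌊n/2⌋ − 1. -/

import Mathlib

open SimpleGraph Finset

/-- An abstract triangulation: a finite nonempty set of triangles (3-element
vertex sets) such that every edge (2-element subset of a triangle) lies in
exactly 1 or 2 triangles. -/
structure AbstractTriangulation (V : Type) [DecidableEq V] [Fintype V] where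
  tris : Finset (Finset V)
  tris_nonempty : tris.Nonempty
  card_three : ∀ t ∈ tris, t.card = 3
  edge_mem : ∀ e : Finset V, e.card = 2 → (∃ t ∈ tris, e ⊆ t) →
    (tris.filter fun t => e ⊆ t).card = 1 ∨ (tris.filter fun t => e ⊆ t).card = 2

namespace AbstractTriangulation

variable {V : Type} [DecidableEq V] [Fintype V]

/-- The vertex set `V(K)`: vertices lying in some triangle. -/
def verts (K : AbstractTriangulation V) : Finset V := K.tris.biUnion id

/-- The edge set `E(K)`: 2-element subsets of triangles. -/
def edges (K : AbstractTriangulation V) : Finset (Finset V) :=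
  K.tris.biUnion fun t => t.powersetCard 2

/-- The 1-skeleton of `K`: `u,v` adjacent iff `{u,v}` is an edge of `K`. -/
def skeleton (K : AbstractTriangulation V) : SimpleGraph V where
  Adj u v := u ≠ v ∧ ∃ t ∈ K.tris, u ∈ t ∧ v ∈ t
  symm := by refine ⟨?_⟩; rintro u v ⟨h, t, ht, hu, hv⟩; exact ⟨h.symm, t, ht, hv, hu⟩
  loopless := by refine ⟨?_⟩; rintro u ⟨h, -⟩; exact h rfl

/-- The boundary `∂K`: the graph on the vertices of `K` whose edges are the
edges of `K` contained in exactly one triangle. -/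
def boundary (K : AbstractTriangulation V) : SimpleGraph V where
  Adj u v := u ≠ v ∧ (K.tris.filter fun t => u ∈ t ∧ v ∈ t).card = 1
  symm := by
    refine ⟨?_⟩
    rintro u v ⟨h, hc⟩
    exact ⟨h.symm, by simpa [and_comm] using hc⟩
  loopless := by refine ⟨?_⟩; rintro u ⟨h, -⟩; exact h rfl

/-- `∂K` is (isomorphic to) the cycle `C_n`, with the identification given by
`f : Fin n → V`: `f` is injective, boundary adjacency corresponds exactly to
cycle adjacency, and every boundary edge joins two vertices in the image of `f`. -/
def BoundaryIsCycle (K : AbstractTriangulation V) (n : ℕ) (f : Fin n → V) : Prop :=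
  Function.Injective f ∧
  (∀ i j : Fin n, K.boundary.Adj (f i) (f j) ↔ (cycleGraph n).Adj i j) ∧
  (∀ u v : V, K.boundary.Adj u v → (∃ i, u = f i) ∧ (∃ j, v = f j))

/-- `K` is a `δ`-Lipschitz filling of `C_n` (with boundary identification `f`):
`∂K = C_n` and `d_K(x,y) ≥ δ · d_{C_n}(x,y)` for all boundary vertices, expressed
by the fact that every walk in the 1-skeleton between boundary vertices has
length at least `δ · d_{C_n}(x,y)`. -/
def IsLipschitzFilling (K : AbstractTriangulation V) (n : ℕ) (δ : ℝ)
    (f : Fin n → V) : Prop :=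
  K.BoundaryIsCycle n f ∧
  ∀ (i j : Fin n) (p : K.skeleton.Walk (f i) (f j)),
    δ * ((cycleGraph n).dist i j : ℝ) ≤ (p.length : ℝ)

end AbstractTriangulation

/-- The cycle graph `C_n` with the vertices `x` and `y` deleted (as a graph on
`Fin n` in which `x` and `y` have become isolated). -/
def deletedCycle (n : ℕ) (x y : Fin n) : SimpleGraph (Fin n) where
  Adj u v := (SimpleGraph.cycleGraph n).Adj u v ∧ u ≠ x ∧ u ≠ y ∧ v ≠ x ∧ v ≠ y
  symm := by refine ⟨?_⟩; rintro u v ⟨h, h1, h2, h3, h4⟩; exact ⟨h.symm, h3, h4, h1, h2⟩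
  loopless := by refine ⟨?_⟩; rintro u ⟨h, -⟩; exact h.ne rfl



section KeyLemma

set_option maxHeartbeats 2000000 in
open AbstractTriangulation in
/-- The core combinatorial lemma: given an explicit arc `x = arc 0, ..., arc c = y`
of the cycle whose interior is exactly `L`, any separator `S` admits a skeleton
path from `f x` to `f y` through `S ∪ {f x, f y}`, whence the length bound. -/
theorem key_lemma {V : Type} [DecidableEq V] [Fintype V]
    (δ : ℝ) (n : ℕ)
    (K : AbstractTriangulation V) (f : Fin n → V)
    (hK : K.IsLipschitzFilling n δ f)
    (x y : Fin n)
    (L R : Set (Fin n))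
    (hxL : x ∉ L) (hyL : y ∉ L) (hxR : x ∉ R) (hyR : y ∉ R)
    (hcover : ∀ u : Fin n, u ≠ x → u ≠ y → u ∈ L ∨ u ∈ R)
    (hLR : ∀ u ∈ L, ∀ v ∈ R, ¬ (deletedCycle n x y).Reachable u v)
    (S : Finset V) (hSx : f x ∉ S) (hSy : f y ∉ S)
    (hsep : ∀ (u v : V) (p : K.skeleton.Walk u v),
      u ∈ f '' L → v ∈ f '' R → f x ∉ p.support → f y ∉ p.support →
      ∃ s ∈ S, s ∈ p.support)
    (c : ℕ) (hc0 : 0 < c) (arc : ℕ → Fin n)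
    (harc0 : arc 0 = x) (harcc : arc c = y)
    (harcadj : ∀ k, k < c → (SimpleGraph.cycleGraph n).Adj (arc k) (arc (k+1)))
    (harcinj : ∀ k, k ≤ c → ∀ m, m ≤ c → arc k = arc m → k = m)
    (hnbr : ∀ k, 0 < k → k < c → ∀ j : Fin n,
      (SimpleGraph.cycleGraph n).Adj (arc k) j → j = arc (k-1) ∨ j = arc (k+1))
    (hLarc : ∀ k, 0 < k → k < c → arc k ∈ L)
    (hLarc' : ∀ i ∈ L, ∃ k, 0 < k ∧ k < c ∧ i = arc k) :
    δ * (((SimpleGraph.cycleGraph n).dist x y : ℕ) : ℝ) ≤ (S.card : ℝ) + 1 := by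
  classical
  obtain ⟨⟨hfinj, hbc, hbim⟩, hlip⟩ := hK
  set G := K.skeleton with hG
  -- the region reachable from the L-side of the boundary
  set A : Set V := {v | ∃ a : Fin n, a ∈ L ∧ f a ∉ S ∧ ∃ p : G.Walk (f a) v,
      ∀ u ∈ p.support, u ∉ S ∧ u ≠ f x ∧ u ≠ f y} with hA
  -- the allowed separator vertices
  set T : Set V := {v | v ∈ S ∨ v = f x ∨ v = f y} with hT
  -- vertices reachable from `f x` inside `T`
  set C : Set V := {v | ∃ p : G.Walk (f x) v, ∀ u ∈ p.support, u ∈ T} with hC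
  have hfxA : f x ∉ A := by
    rintro ⟨a, -, -, p, hp⟩
    exact (hp _ p.end_mem_support).2.1 rfl
  have hfyA : f y ∉ A := by
    rintro ⟨a, -, -, p, hp⟩
    exact (hp _ p.end_mem_support).2.2 rfl
  have hAS : ∀ v ∈ A, v ∉ S := by
    rintro v ⟨a, -, -, p, hp⟩
    exact (hp _ p.end_mem_support).1
  have hAextend : ∀ v ∈ A, ∀ w, G.Adj v w → w ∉ S → w ≠ f x → w ≠ f y → w ∈ A := by
    rintro v ⟨a, haL, haS, p, hp⟩ w hvw hwS hwx hwy
    refine ⟨a, haL, haS, p.concat hvw, ?_⟩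
    intro u hu
    rw [SimpleGraph.Walk.support_concat, List.mem_append] at hu
    rcases hu with hu | hu
    · exact hp u hu
    · simp only [List.mem_singleton] at hu
      subst hu; exact ⟨hwS, hwx, hwy⟩
  have hLA : ∀ a ∈ L, f a ∉ S → f a ∈ A := by
    intro a haL haS
    have hax : a ≠ x := fun h => hxL (h ▸ haL)
    have hay : a ≠ y := fun h => hyL (h ▸ haL)
    exact ⟨a, haL, haS, SimpleGraph.Walk.nil, by
      intro u hu
      simp only [SimpleGraph.Walk.support_nil, List.mem_singleton] at hu
      subst hu
      exact ⟨haS, fun h => hax (hfinj h), fun h => hay (hfinj h)⟩⟩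
  have hRA : ∀ b ∈ R, f b ∉ A := by
    rintro b hbR ⟨a, haL, haS, p, hp⟩
    obtain ⟨s, hsS, hsp⟩ := hsep (f a) (f b) p ⟨a, haL, rfl⟩ ⟨b, hbR, rfl⟩
      (fun h => (hp _ h).2.1 rfl) (fun h => (hp _ h).2.2 rfl)
    exact (hp s hsp).1 hsS
  have hN : ∀ v w, v ∈ A → G.Adj v w → w ∉ A → w ∈ T := by
    intro v w hv hvw hw
    by_contra hwT
    simp only [hT, Set.mem_setOf_eq, not_or] at hwT
    exact hw (hAextend v hv w hvw hwT.1 hwT.2.1 hwT.2.2)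
  have hfxT : f x ∈ T := Or.inr (Or.inl rfl)
  have hfyT : f y ∈ T := Or.inr (Or.inr rfl)
  have hfxC : f x ∈ C := ⟨SimpleGraph.Walk.nil, by
    intro u hu
    simp only [SimpleGraph.Walk.support_nil, List.mem_singleton] at hu
    subst hu; exact hfxT⟩
  have hCext : ∀ v ∈ C, ∀ w, G.Adj v w → w ∈ T → w ∈ C := by
    rintro v ⟨p, hp⟩ w hvw hwT
    refine ⟨p.concat hvw, ?_⟩
    intro u hu
    rw [SimpleGraph.Walk.support_concat, List.mem_append] at hu
    rcases hu with hu | hu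
    · exact hp u hu
    · simp only [List.mem_singleton] at hu
      subst hu; exact hwT
  have hCiff : ∀ v w, G.Adj v w → v ∈ T → w ∈ T → (v ∈ C ↔ w ∈ C) := by
    intro v w hvw hvT hwT
    exact ⟨fun h => hCext v h w hvw hwT, fun h => hCext w h v hvw.symm hvT⟩
  -- edges of the triangulation
  have hedge_card : ∀ e ∈ K.edges, e.card = 2 ∧ ∃ t ∈ K.tris, e ⊆ t := by
    intro e he
    simp only [AbstractTriangulation.edges, Finset.mem_biUnion, Finset.mem_powersetCard] at he
    obtain ⟨t, ht, hsub, hcard⟩ := he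
    exact ⟨hcard, t, ht, hsub⟩
  have hpair_edge : ∀ t ∈ K.tris, ∀ u ∈ t, ∀ v ∈ t, u ≠ v →
      ({u, v} : Finset V) ∈ K.edges := by
    intro t ht u hu v hv huv
    simp only [AbstractTriangulation.edges, Finset.mem_biUnion, Finset.mem_powersetCard]
    exact ⟨t, ht, by simp [Finset.insert_subset_iff, hu, hv], Finset.card_pair huv⟩
  have hadjG : ∀ t ∈ K.tris, ∀ u ∈ t, ∀ v ∈ t, u ≠ v → G.Adj u v := by
    intro t ht u hu v hv huv
    exact ⟨huv, t, ht, hu, hv⟩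
  set τ : Finset V → ℕ := fun e => (K.tris.filter fun t => e ⊆ t).card with hτdef
  have hτ12 : ∀ e ∈ K.edges, τ e = 1 ∨ τ e = 2 := by
    intro e he
    obtain ⟨hcard, hex⟩ := hedge_card e he
    exact K.edge_mem e hcard hex
  have hbdry : ∀ u v : V, u ≠ v → (τ {u, v} = 1 ↔ K.boundary.Adj u v) := by
    intro u v huv
    have : (K.tris.filter fun t => ({u, v} : Finset V) ⊆ t)
        = K.tris.filter fun t => u ∈ t ∧ v ∈ t := by
      apply Finset.filter_congr
      intro t _
      simp [Finset.insert_subset_iff]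
    constructor
    · intro h
      exact ⟨huv, by rw [← this]; exact h⟩
    · rintro ⟨-, h⟩
      rw [hτdef]; simp only []; rw [this]; exact h
  -- the bad edges: bichromatic (w.r.t. `A`) with outer vertex in `C`
  set Bad : Finset (Finset V) := K.edges.filter
      (fun e => (∃ a ∈ e, a ∈ A) ∧ ∃ b ∈ e, b ∉ A ∧ b ∈ C) with hBadDef
  set BadBd : Finset (Finset V) := Bad.filter (fun e => τ e = 1) with hBadBdDef
  have hBadmem : ∀ (α β : V), α ≠ β → ({α, β} : Finset V) ∈ K.edges →
      (({α, β} : Finset V) ∈ Bad ↔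
        ((α ∈ A ∨ β ∈ A) ∧ ((α ∉ A ∧ α ∈ C) ∨ (β ∉ A ∧ β ∈ C)))) := by
    intro α β hne he
    rw [hBadDef, Finset.mem_filter]
    constructor
    · rintro ⟨-, ⟨a, ha, haA⟩, ⟨b, hb, hbA, hbC⟩⟩
      simp only [Finset.mem_insert, Finset.mem_singleton] at ha hb
      constructor
      · rcases ha with rfl | rfl
        · exact Or.inl haA
        · exact Or.inr haA
      · rcases hb with rfl | rfl
        · exact Or.inl ⟨hbA, hbC⟩
        · exact Or.inr ⟨hbA, hbC⟩
    · rintro ⟨h1, h2⟩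
      refine ⟨he, ?_, ?_⟩
      · rcases h1 with h | h
        · exact ⟨α, by simp, h⟩
        · exact ⟨β, by simp, h⟩
      · rcases h2 with h | h
        · exact ⟨α, by simp, h⟩
        · exact ⟨β, by simp, h⟩
  have hpair_ne : ∀ (z : V) (s₁ s₂ : Finset V), z ∈ s₁ → z ∉ s₂ → s₁ ≠ s₂ :=
    fun z s₁ s₂ h1 h2 h => h2 (h ▸ h1)
  have hclaim2 : ∀ t ∈ K.tris, Even (Bad.filter (fun e => e ⊆ t)).card := by
    intro t ht
    obtain ⟨u, v, w, huv, huw, hvw, ht3⟩ := Finset.card_eq_three.mp (K.card_three t ht)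
    have hut : u ∈ t := by rw [ht3]; simp
    have hvt : v ∈ t := by rw [ht3]; simp
    have hwt : w ∈ t := by rw [ht3]; simp
    have hsub2 : ∀ e : Finset V, e ⊆ t → e.card = 2 →
        e = {u, v} ∨ e = {u, w} ∨ e = {v, w} := by
      intro e hesub hecard
      obtain ⟨a, b, hab, he⟩ := Finset.card_eq_two.mp hecard
      subst he
      have ha : a ∈ t := hesub (by simp)
      have hb : b ∈ t := hesub (by simp)
      rw [ht3] at ha hb
      simp only [Finset.mem_insert, Finset.mem_singleton] at ha hb
      rcases ha with rfl | rfl | rfl <;> rcases hb with rfl | rfl | rfl <;>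
        first
          | exact absurd rfl hab
          | exact Or.inl rfl
          | exact Or.inr (Or.inl rfl)
          | exact Or.inr (Or.inr rfl)
          | exact Or.inl (Finset.pair_comm _ _)
          | exact Or.inr (Or.inl (Finset.pair_comm _ _))
          | exact Or.inr (Or.inr (Finset.pair_comm _ _))
    have hfe : Bad.filter (fun e => e ⊆ t)
        = ({({u, v} : Finset V), {u, w}, {v, w}} : Finset (Finset V)).filter
            (fun e => e ∈ Bad) := by
      ext e
      simp only [Finset.mem_filter, Finset.mem_insert, Finset.mem_singleton]
      constructor
      · rintro ⟨heB, het⟩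
        have hecard := (hedge_card e (Finset.mem_of_mem_filter e heB)).1
        exact ⟨hsub2 e het hecard, heB⟩
      · rintro ⟨h3, heB⟩
        refine ⟨heB, ?_⟩
        rcases h3 with rfl | rfl | rfl <;> rw [ht3] <;>
          simp [Finset.insert_subset_iff]
    have h12 : ({u, v} : Finset V) ≠ {u, w} :=
      hpair_ne v _ _ (by simp) (by
        simp only [Finset.mem_insert, Finset.mem_singleton]; push_neg
        exact ⟨Ne.symm huv, hvw⟩)
    have h13 : ({u, v} : Finset V) ≠ {v, w} :=
      hpair_ne u _ _ (by simp) (by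
        simp only [Finset.mem_insert, Finset.mem_singleton]; push_neg
        exact ⟨huv, huw⟩)
    have h23 : ({u, w} : Finset V) ≠ {v, w} :=
      hpair_ne u _ _ (by simp) (by
        simp only [Finset.mem_insert, Finset.mem_singleton]; push_neg
        exact ⟨huv, huw⟩)
    rw [hfe, Finset.card_filter]
    rw [Finset.sum_insert (by
      simp only [Finset.mem_insert, Finset.mem_singleton]; push_neg
      exact ⟨h12, h13⟩)]
    rw [Finset.sum_insert (by
      simp only [Finset.mem_singleton]; exact h23)]
    rw [Finset.sum_singleton]
    have b1 := hBadmem u v huv (hpair_edge t ht u hut v hvt huv)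
    have b2 := hBadmem u w huw (hpair_edge t ht u hut w hwt huw)
    have b3 := hBadmem v w hvw (hpair_edge t ht v hvt w hwt hvw)
    have aduv := hadjG t ht u hut v hvt huv
    have aduw := hadjG t ht u hut w hwt huw
    have advw := hadjG t ht v hvt w hwt hvw
    by_cases hu : u ∈ A <;> by_cases hv : v ∈ A <;> by_cases hw : w ∈ A
    · -- u v w all in A
      have n1 : ({u, v} : Finset V) ∉ Bad := by rw [b1]; simp [hu, hv]
      have n2 : ({u, w} : Finset V) ∉ Bad := by rw [b2]; simp [hu, hw]
      have n3 : ({v, w} : Finset V) ∉ Bad := by rw [b3]; simp [hv, hw]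
      rw [if_neg n1, if_neg n2, if_neg n3]; decide
    · -- u v in A, w not
      have n1 : ({u, v} : Finset V) ∉ Bad := by rw [b1]; simp [hu, hv]
      have e2 : (({u, w} : Finset V) ∈ Bad) ↔ w ∈ C := by rw [b2]; simp [hu, hw]
      have e3 : (({v, w} : Finset V) ∈ Bad) ↔ w ∈ C := by rw [b3]; simp [hv, hw]
      by_cases hwC : w ∈ C
      · rw [if_neg n1, if_pos (e2.mpr hwC), if_pos (e3.mpr hwC)]; decide
      · rw [if_neg n1, if_neg (fun h => hwC (e2.mp h)), if_neg (fun h => hwC (e3.mp h))]; decide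
    · -- u w in A, v not
      have e1 : (({u, v} : Finset V) ∈ Bad) ↔ v ∈ C := by rw [b1]; simp [hu, hv]
      have n2 : ({u, w} : Finset V) ∉ Bad := by rw [b2]; simp [hu, hw]
      have e3 : (({v, w} : Finset V) ∈ Bad) ↔ v ∈ C := by rw [b3]; simp [hv, hw]
      by_cases hvC : v ∈ C
      · rw [if_pos (e1.mpr hvC), if_neg n2, if_pos (e3.mpr hvC)]; decide
      · rw [if_neg (fun h => hvC (e1.mp h)), if_neg n2, if_neg (fun h => hvC (e3.mp h))]; decide
    · -- u in A, v w not
      have e1 : (({u, v} : Finset V) ∈ Bad) ↔ v ∈ C := by rw [b1]; simp [hu, hv]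
      have e2 : (({u, w} : Finset V) ∈ Bad) ↔ w ∈ C := by rw [b2]; simp [hu, hw]
      have n3 : ({v, w} : Finset V) ∉ Bad := by rw [b3]; simp [hv, hw]
      have hlink : v ∈ C ↔ w ∈ C :=
        hCiff v w advw (hN u v hu aduv hv) (hN u w hu aduw hw)
      by_cases hvC : v ∈ C
      · rw [if_pos (e1.mpr hvC), if_pos (e2.mpr (hlink.mp hvC)), if_neg n3]; decide
      · rw [if_neg (fun h => hvC (e1.mp h)),
          if_neg (fun h => hvC (hlink.mpr (e2.mp h))), if_neg n3]; decide
    · -- v w in A, u not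
      have e1 : (({u, v} : Finset V) ∈ Bad) ↔ u ∈ C := by rw [b1]; simp [hu, hv]
      have e2 : (({u, w} : Finset V) ∈ Bad) ↔ u ∈ C := by rw [b2]; simp [hu, hw]
      have n3 : ({v, w} : Finset V) ∉ Bad := by rw [b3]; simp [hv, hw]
      by_cases huC : u ∈ C
      · rw [if_pos (e1.mpr huC), if_pos (e2.mpr huC), if_neg n3]; decide
      · rw [if_neg (fun h => huC (e1.mp h)), if_neg (fun h => huC (e2.mp h)), if_neg n3]; decide
    · -- v in A, u w not
      have e1 : (({u, v} : Finset V) ∈ Bad) ↔ u ∈ C := by rw [b1]; simp [hu, hv]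
      have n2 : ({u, w} : Finset V) ∉ Bad := by rw [b2]; simp [hu, hw]
      have e3 : (({v, w} : Finset V) ∈ Bad) ↔ w ∈ C := by rw [b3]; simp [hv, hw]
      have hlink : u ∈ C ↔ w ∈ C :=
        hCiff u w aduw (hN v u hv aduv.symm hu) (hN v w hv advw hw)
      by_cases huC : u ∈ C
      · rw [if_pos (e1.mpr huC), if_neg n2, if_pos (e3.mpr (hlink.mp huC))]; decide
      · rw [if_neg (fun h => huC (e1.mp h)), if_neg n2,
          if_neg (fun h => huC (hlink.mpr (e3.mp h)))]; decide
    · -- w in A, u v not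
      have n1 : ({u, v} : Finset V) ∉ Bad := by rw [b1]; simp [hu, hv]
      have e2 : (({u, w} : Finset V) ∈ Bad) ↔ u ∈ C := by rw [b2]; simp [hu, hw]
      have e3 : (({v, w} : Finset V) ∈ Bad) ↔ v ∈ C := by rw [b3]; simp [hv, hw]
      have hlink : u ∈ C ↔ v ∈ C :=
        hCiff u v aduv (hN w u hw aduw.symm hu) (hN w v hw advw.symm hv)
      by_cases huC : u ∈ C
      · rw [if_neg n1, if_pos (e2.mpr huC), if_pos (e3.mpr (hlink.mp huC))]; decide
      · rw [if_neg n1, if_neg (fun h => huC (e2.mp h)),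
          if_neg (fun h => huC (hlink.mpr (e3.mp h)))]; decide
    · -- none in A
      have n1 : ({u, v} : Finset V) ∉ Bad := by rw [b1]; simp [hu, hv]
      have n2 : ({u, w} : Finset V) ∉ Bad := by rw [b2]; simp [hu, hw]
      have n3 : ({v, w} : Finset V) ∉ Bad := by rw [b3]; simp [hv, hw]
      rw [if_neg n1, if_neg n2, if_neg n3]; decide
  -- double counting: the bad edges counted with multiplicity form an even total
  have hsum : ∑ t ∈ K.tris, (Bad.filter (fun e => e ⊆ t)).card = ∑ e ∈ Bad, τ e := by
    calc ∑ t ∈ K.tris, (Bad.filter (fun e => e ⊆ t)).card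
        = ∑ t ∈ K.tris, ∑ e ∈ Bad, if e ⊆ t then 1 else 0 := by
          refine Finset.sum_congr rfl fun t _ => ?_
          rw [Finset.card_filter]
      _ = ∑ e ∈ Bad, ∑ t ∈ K.tris, if e ⊆ t then 1 else 0 := Finset.sum_comm
      _ = ∑ e ∈ Bad, τ e := by
          refine Finset.sum_congr rfl fun e _ => ?_
          rw [hτdef]; simp only []; rw [Finset.card_filter]
  have heven : Even (∑ e ∈ Bad, τ e) := by
    rw [← hsum]
    exact Finset.even_sum _ hclaim2
  have hBadBd_even : Even BadBd.card := by
    have hsplit : ∑ e ∈ Bad, τ e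
        = ∑ e ∈ Bad.filter (fun e => τ e = 1), τ e
          + ∑ e ∈ Bad.filter (fun e => ¬ τ e = 1), τ e :=
      (Finset.sum_filter_add_sum_filter_not _ _ _).symm
    have h1 : ∑ e ∈ Bad.filter (fun e => τ e = 1), τ e = BadBd.card := by
      rw [hBadBdDef, Finset.card_eq_sum_ones]
      refine Finset.sum_congr rfl fun e he => ?_
      exact (Finset.mem_filter.mp he).2
    have h2 : ∑ e ∈ Bad.filter (fun e => ¬ τ e = 1), τ e
        = 2 * (Bad.filter (fun e => ¬ τ e = 1)).card := by
      have htwo : ∀ e ∈ Bad.filter (fun e => ¬ τ e = 1), τ e = 2 := by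
        intro e he
        rw [Finset.mem_filter] at he
        rcases hτ12 e (Finset.mem_of_mem_filter e he.1) with h | h
        · exact absurd h he.2
        · exact h
      rw [Finset.sum_congr rfl htwo, Finset.sum_const, smul_eq_mul, Nat.mul_comm]
    rw [hsplit, h1, h2] at heven
    obtain ⟨m, hm⟩ := heven
    exact ⟨m - (Bad.filter (fun e => ¬ τ e = 1)).card, by omega⟩
  -- the boundary bad edges are exactly the "change" edges of the L-arc
  set eg : ℕ → Finset V := fun k => {f (arc k), f (arc (k+1))} with hegDef
  set Q : ℕ → Prop := fun k =>
      (f (arc k) ∈ A ∧ f (arc (k+1)) ∉ A ∧ f (arc (k+1)) ∈ C) ∨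
      (f (arc k) ∉ A ∧ f (arc (k+1)) ∈ A ∧ f (arc k) ∈ C) with hQDef
  have harcne : ∀ k, k < c → arc k ≠ arc (k+1) := fun k hk => (harcadj k hk).ne
  have hfne : ∀ k, k < c → f (arc k) ≠ f (arc (k+1)) :=
    fun k hk h => harcne k hk (hfinj h)
  have hegbd : ∀ k, k < c → τ (eg k) = 1 := by
    intro k hk
    exact (hbdry _ _ (hfne k hk)).mpr ((hbc _ _).mpr (harcadj k hk))
  have heg_edges : ∀ k, k < c → eg k ∈ K.edges := by
    intro k hk
    have h1 := hegbd k hk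
    have h2 : (K.tris.filter fun t => eg k ⊆ t).Nonempty := by
      rw [← Finset.card_pos]
      show 0 < τ (eg k)
      rw [h1]
      norm_num
    obtain ⟨t, ht⟩ := h2
    rw [Finset.mem_filter] at ht
    simp only [AbstractTriangulation.edges, Finset.mem_biUnion, Finset.mem_powersetCard]
    exact ⟨t, ht.1, ht.2, Finset.card_pair (hfne k hk)⟩
  have hQBad : ∀ k, k < c → (eg k ∈ BadBd ↔ Q k) := by
    intro k hk
    have hmem := hBadmem (f (arc k)) (f (arc (k+1))) (hfne k hk) (heg_edges k hk)
    constructor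
    · intro h
      have hB : ({f (arc k), f (arc (k+1))} : Finset V) ∈ Bad :=
        Finset.mem_of_mem_filter _ h
      have h' := hmem.mp hB
      show (f (arc k) ∈ A ∧ f (arc (k+1)) ∉ A ∧ f (arc (k+1)) ∈ C) ∨
        (f (arc k) ∉ A ∧ f (arc (k+1)) ∈ A ∧ f (arc k) ∈ C)
      tauto
    · intro hQ
      have hQ' : (f (arc k) ∈ A ∧ f (arc (k+1)) ∉ A ∧ f (arc (k+1)) ∈ C) ∨
        (f (arc k) ∉ A ∧ f (arc (k+1)) ∈ A ∧ f (arc k) ∈ C) := hQ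
      have hB : ({f (arc k), f (arc (k+1))} : Finset V) ∈ Bad := hmem.mpr (by tauto)
      rw [hBadBdDef, Finset.mem_filter]
      exact ⟨hB, hegbd k hk⟩
  -- identification of the boundary bad edges with the arc change edges
  have himage : BadBd = ((Finset.range c).filter Q).image eg := by
    ext e
    constructor
    · intro he
      have heB : e ∈ Bad := Finset.mem_of_mem_filter _ he
      have hτ1 : τ e = 1 := (Finset.mem_filter.mp he).2
      have heE : e ∈ K.edges := Finset.mem_of_mem_filter _ heB
      have hcard2 := (hedge_card e heE).1
      obtain ⟨-, ⟨a0, ha0e, ha0A⟩, ⟨b0, hb0e, hb0A, hb0C⟩⟩ := Finset.mem_filter.mp heB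
      have hab : a0 ≠ b0 := fun h => hb0A (h ▸ ha0A)
      have hepair : e = {a0, b0} := by
        refine (Finset.eq_of_subset_of_card_le ?_ ?_).symm
        · intro z hz
          simp only [Finset.mem_insert, Finset.mem_singleton] at hz
          rcases hz with rfl | rfl
          · exact ha0e
          · exact hb0e
        · rw [hcard2, Finset.card_pair hab]
      have hbadj : K.boundary.Adj a0 b0 := by
        refine (hbdry a0 b0 hab).mp ?_
        rw [← hepair]; exact hτ1
      obtain ⟨⟨i, hi⟩, ⟨j, hj⟩⟩ := hbim a0 b0 hbadj
      subst hi; subst hj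
      have hcycadj : (SimpleGraph.cycleGraph n).Adj i j := (hbc i j).mp hbadj
      have hix : i ≠ x := fun h => hfxA (h ▸ ha0A)
      have hiy : i ≠ y := fun h => hfyA (h ▸ ha0A)
      have hiR : i ∉ R := fun h => hRA i h ha0A
      have hiL : i ∈ L := (hcover i hix hiy).resolve_right hiR
      obtain ⟨k, hk0, hkc, rfl⟩ := hLarc' i hiL
      rcases hnbr k hk0 hkc j hcycadj with hj | hj
      · -- j = arc (k-1), so e = eg (k-1)
        subst hj
        have hk1 : k - 1 + 1 = k := by omega
        refine Finset.mem_image.mpr ⟨k - 1, ?_, ?_⟩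
        · rw [Finset.mem_filter, Finset.mem_range]
          refine ⟨by omega, ?_⟩
          show (f (arc (k-1)) ∈ A ∧ f (arc (k-1+1)) ∉ A ∧ f (arc (k-1+1)) ∈ C) ∨
            (f (arc (k-1)) ∉ A ∧ f (arc (k-1+1)) ∈ A ∧ f (arc (k-1)) ∈ C)
          rw [hk1]
          exact Or.inr ⟨hb0A, ha0A, hb0C⟩
        · show ({f (arc (k-1)), f (arc (k-1+1))} : Finset V) = e
          rw [hk1, hepair, Finset.pair_comm]
      · -- j = arc (k+1), so e = eg k
        subst hj
        refine Finset.mem_image.mpr ⟨k, ?_, ?_⟩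
        · rw [Finset.mem_filter, Finset.mem_range]
          refine ⟨hkc, ?_⟩
          show (f (arc k) ∈ A ∧ f (arc (k+1)) ∉ A ∧ f (arc (k+1)) ∈ C) ∨
            (f (arc k) ∉ A ∧ f (arc (k+1)) ∈ A ∧ f (arc k) ∈ C)
          exact Or.inl ⟨ha0A, hb0A, hb0C⟩
        · show ({f (arc k), f (arc (k+1))} : Finset V) = e
          rw [hepair]
    · intro he
      obtain ⟨k, hk, rfl⟩ := Finset.mem_image.mp he
      rw [Finset.mem_filter, Finset.mem_range] at hk
      exact (hQBad k hk.1).mpr hk.2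
  have hcardQ : BadBd.card = ((Finset.range c).filter Q).card := by
    rw [himage]
    apply Finset.card_image_of_injOn
    intro k hk m hm heq
    rw [Finset.mem_coe, Finset.mem_filter, Finset.mem_range] at hk hm
    have hmem1 : f (arc m) ∈ ({f (arc k), f (arc (k+1))} : Finset V) := by
      show f (arc m) ∈ eg k
      rw [heq]
      show f (arc m) ∈ ({f (arc m), f (arc (m+1))} : Finset V)
      simp
    have hmem2 : f (arc (m+1)) ∈ ({f (arc k), f (arc (k+1))} : Finset V) := by
      show f (arc (m+1)) ∈ eg k
      rw [heq]
      show f (arc (m+1)) ∈ ({f (arc m), f (arc (m+1))} : Finset V)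
      simp
    simp only [Finset.mem_insert, Finset.mem_singleton] at hmem1 hmem2
    have e1 : m = k ∨ m = k + 1 := by
      rcases hmem1 with h | h
      · exact Or.inl (harcinj m (by omega) k (by omega) (hfinj h))
      · exact Or.inr (harcinj m (by omega) (k+1) (by omega) (hfinj h))
    have e2 : m + 1 = k ∨ m + 1 = k + 1 := by
      rcases hmem2 with h | h
      · exact Or.inl (harcinj (m+1) (by omega) k (by omega) (hfinj h))
      · exact Or.inr (harcinj (m+1) (by omega) (k+1) (by omega) (hfinj h))
    omega
  -- telescoping parity computation in `ZMod 2`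
  set g : ℕ → ZMod 2 := fun m => if f (arc m) ∉ A ∧ f (arc m) ∈ C then 1 else 0
    with hgDef
  have hstep : ∀ k, k < c → (if Q k then (1 : ZMod 2) else 0) = g (k+1) - g k := by
    intro k hk
    have hadjk : G.Adj (f (arc k)) (f (arc (k+1))) := by
      obtain ⟨-, t, ht, hsub⟩ := hedge_card (eg k) (heg_edges k hk)
      have hsub' : ({f (arc k), f (arc (k+1))} : Finset V) ⊆ t := hsub
      exact hadjG t ht _ (hsub' (by simp)) _ (hsub' (by simp)) (hfne k hk)
    have hT1 : f (arc k) ∉ A → f (arc k) ∈ T := by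
      intro hnA
      rcases Nat.eq_zero_or_pos k with rfl | hk0
      · rw [harc0]; exact hfxT
      · have hS' : f (arc k) ∈ S := by
          by_contra hS''
          exact hnA (hLA _ (hLarc k hk0 hk) hS'')
        exact Or.inl hS'
    have hT2 : f (arc (k+1)) ∉ A → f (arc (k+1)) ∈ T := by
      intro hnA
      rcases (by omega : k + 1 = c ∨ k + 1 < c) with heq | hlt
      · rw [heq, harcc]; exact hfyT
      · have hS' : f (arc (k+1)) ∈ S := by
          by_contra hS''
          exact hnA (hLA _ (hLarc (k+1) (by omega) hlt) hS'')
        exact Or.inl hS'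
    have hQchar : Q k ↔ ((f (arc k) ∈ A ∧ f (arc (k+1)) ∉ A ∧ f (arc (k+1)) ∈ C) ∨
        (f (arc k) ∉ A ∧ f (arc (k+1)) ∈ A ∧ f (arc k) ∈ C)) := Iff.rfl
    have hg1 : g (k+1) = if f (arc (k+1)) ∉ A ∧ f (arc (k+1)) ∈ C then 1 else 0 := rfl
    have hg0 : g k = if f (arc k) ∉ A ∧ f (arc k) ∈ C then 1 else 0 := rfl
    rw [hg1, hg0]
    by_cases hα : f (arc k) ∈ A <;> by_cases hβ : f (arc (k+1)) ∈ A
    · rw [if_neg (fun h => (hQchar.mp h).elim (fun h' => h'.2.1 hβ) (fun h' => h'.1 hα)),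
        if_neg (fun h => h.1 hβ), if_neg (fun h => h.1 hα)]
      decide
    · by_cases hβC : f (arc (k+1)) ∈ C
      · rw [if_pos (hQchar.mpr (Or.inl ⟨hα, hβ, hβC⟩)), if_pos ⟨hβ, hβC⟩,
          if_neg (fun h => h.1 hα)]
        decide
      · rw [if_neg (fun h => (hQchar.mp h).elim (fun h' => hβC h'.2.2)
            (fun h' => h'.1 hα)), if_neg (fun h => hβC h.2), if_neg (fun h => h.1 hα)]
        decide
    · by_cases hαC : f (arc k) ∈ C
      · rw [if_pos (hQchar.mpr (Or.inr ⟨hα, hβ, hαC⟩)), if_neg (fun h => h.1 hβ),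
          if_pos ⟨hα, hαC⟩]
        decide
      · rw [if_neg (fun h => (hQchar.mp h).elim (fun h' => hα h'.1)
            (fun h' => hαC h'.2.2)), if_neg (fun h => h.1 hβ), if_neg (fun h => hαC h.2)]
        decide
    · have hCeq : f (arc k) ∈ C ↔ f (arc (k+1)) ∈ C := hCiff _ _ hadjk (hT1 hα) (hT2 hβ)
      rw [if_neg (fun h => (hQchar.mp h).elim (fun h' => hα h'.1) (fun h' => hβ h'.2.1))]
      by_cases hαC : f (arc k) ∈ C
      · rw [if_pos ⟨hβ, hCeq.mp hαC⟩, if_pos ⟨hα, hαC⟩]; decide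
      · rw [if_neg (fun h => hαC (hCeq.mpr h.2)), if_neg (fun h => hαC h.2)]; decide
  have htel : ∑ k ∈ Finset.range c, (if Q k then (1 : ZMod 2) else 0) = g c - g 0 := by
    rw [Finset.sum_congr rfl (fun k hk => hstep k (Finset.mem_range.mp hk))]
    exact Finset.sum_range_sub g c
  have hcast : ((((Finset.range c).filter Q).card : ℕ) : ZMod 2)
      = ∑ k ∈ Finset.range c, (if Q k then (1 : ZMod 2) else 0) := by
    rw [Finset.card_filter, Nat.cast_sum]
    refine Finset.sum_congr rfl fun k _ => ?_
    split_ifs <;> simp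
  have hBadBd0 : ((BadBd.card : ℕ) : ZMod 2) = 0 := by
    obtain ⟨m, hm⟩ := hBadBd_even
    rw [hm, Nat.cast_add, ← two_mul]
    have h2 : (2 : ZMod 2) = 0 := by decide
    rw [h2, zero_mul]
  have hgc : g c = g 0 := by
    have h0 : g c - g 0 = 0 := by
      rw [← htel, ← hcast, ← hcardQ, hBadBd0]
    exact sub_eq_zero.mp h0
  have hg0 : g 0 = 1 := by
    have : g 0 = if f (arc 0) ∉ A ∧ f (arc 0) ∈ C then 1 else 0 := rfl
    rw [this, harc0, if_pos ⟨hfxA, hfxC⟩]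
  have hfyC : f y ∈ C := by
    have hgc1 : g c = 1 := hgc.trans hg0
    have : g c = if f (arc c) ∉ A ∧ f (arc c) ∈ C then 1 else 0 := rfl
    rw [this, harcc] at hgc1
    by_contra hC'
    rw [if_neg (fun h => hC' h.2)] at hgc1
    exact absurd hgc1 (by decide)
  -- extract a short path and conclude
  obtain ⟨p, hp⟩ := hfyC
  have hpath := p.bypass_isPath
  have hsupsub := p.support_bypass_subset
  have hnodup : p.bypass.support.Nodup := hpath.support_nodup
  have hsubT : ∀ u ∈ p.bypass.support, u ∈ T := fun u hu => hp u (hsupsub hu)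
  have hlen : p.bypass.length + 1 ≤ S.card + 2 := by
    have h1 : p.bypass.support.toFinset ⊆ insert (f x) (insert (f y) S) := by
      intro u hu
      rw [List.mem_toFinset] at hu
      rcases hsubT u hu with h | h | h
      · exact Finset.mem_insert.mpr (Or.inr (Finset.mem_insert.mpr (Or.inr h)))
      · rw [h]; exact Finset.mem_insert_self _ _
      · rw [h]; exact Finset.mem_insert.mpr (Or.inr (Finset.mem_insert_self _ _))
    have h2 : p.bypass.support.toFinset.card = p.bypass.length + 1 := by
      rw [List.toFinset_card_of_nodup hnodup, SimpleGraph.Walk.length_support]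
    have h3 := Finset.card_le_card h1
    have h4 := Finset.card_insert_le (f x) (insert (f y) S)
    have h5 := Finset.card_insert_le (f y) S
    omega
  have hlip' := hlip x y p.bypass
  have hql : (p.bypass.length : ℝ) ≤ (S.card : ℝ) + 1 := by
    have : p.bypass.length ≤ S.card + 1 := by omega
    exact_mod_cast this
  linarith

end KeyLemma

/-- Fix `0 < δ ≤ 1`, `n ≥ 4`, a `δ`-Lipschitz filling `K` of
`C_n`, vertices `x,y` of `C_n` with `d_{C_n}(x,y) = ⌊n/2⌋`, and the two
components `L,R` of `C_n - x - y`. Every `S ⊆ V(K) \ {x,y}` separating `L`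
from `R` in `K - x - y` satisfies `|S| ≥ δ⌊n/2⌋ - 1`. -/
theorem separator_lower_bound {V : Type} [DecidableEq V] [Fintype V]
    (δ : ℝ) (hδ0 : 0 < δ) (hδ1 : δ ≤ 1) (n : ℕ) (hn : 4 ≤ n)
    (K : AbstractTriangulation V) (f : Fin n → V)
    (hK : K.IsLipschitzFilling n δ f)
    (x y : Fin n) (hdist : (SimpleGraph.cycleGraph n).dist x y = n / 2)
    (L R : Set (Fin n))
    (hLne : L.Nonempty) (hRne : R.Nonempty) (hdisj : Disjoint L R)
    (hxL : x ∉ L) (hyL : y ∉ L) (hxR : x ∉ R) (hyR : y ∉ R)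
    (hcover : ∀ u : Fin n, u ≠ x → u ≠ y → u ∈ L ∨ u ∈ R)
    (hLconn : ∀ u ∈ L, ∀ v ∈ L, (deletedCycle n x y).Reachable u v)
    (hRconn : ∀ u ∈ R, ∀ v ∈ R, (deletedCycle n x y).Reachable u v)
    (hLR : ∀ u ∈ L, ∀ v ∈ R, ¬ (deletedCycle n x y).Reachable u v)
    (S : Finset V) (hSK : S ⊆ K.verts) (hSx : f x ∉ S) (hSy : f y ∉ S)
    (hsep : ∀ (u v : V) (p : K.skeleton.Walk u v),
      u ∈ f '' L → v ∈ f '' R → f x ∉ p.support → f y ∉ p.support →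
      ∃ s ∈ S, s ∈ p.support) :
    δ * ((n / 2 : ℕ) : ℝ) - 1 ≤ (S.card : ℝ) := by
  classical
  haveI : NeZero n := ⟨by omega⟩
  letI := Fin.instCommRing n
  have hxy : x ≠ y := by
    intro h
    rw [h, SimpleGraph.dist_self] at hdist
    omega
  set c : ℕ := ((y - x : Fin n)).val with hcdef
  have hcn : c < n := (y - x).isLt
  have hc0 : 0 < c := by
    rcases Nat.eq_zero_or_pos c with h | h
    · exfalso
      have h1 : (y - x : Fin n) = 0 := by
        apply Fin.val_injective
        rw [Fin.val_zero, ← hcdef]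
        exact h
      exact hxy (sub_eq_zero.mp h1).symm
    · exact h
  set arc : ℕ → Fin n := fun k => x + (k : Fin n) with harcdef
  have harc0 : arc 0 = x := by
    show x + ((0 : ℕ) : Fin n) = x
    norm_num
  have harcc : arc c = y := by
    show x + (((y - x : Fin n)).val : Fin n) = y
    rw [Fin.cast_val_eq_self]
    ring
  have hone : (1 : Fin n).val = 1 := by
    rw [Fin.val_one']
    exact Nat.mod_eq_of_lt (by omega)
  have hstep1 : ∀ k : ℕ, arc (k + 1) = arc k + 1 := by
    intro k
    show x + ((k + 1 : ℕ) : Fin n) = x + ((k : ℕ) : Fin n) + 1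
    push_cast
    ring
  have hadj : ∀ k : ℕ, (SimpleGraph.cycleGraph n).Adj (arc k) (arc (k + 1)) := by
    intro k
    rw [SimpleGraph.cycleGraph_adj']
    refine Or.inr ?_
    rw [hstep1, show arc k + 1 - arc k = 1 by ring]
    exact hone
  have harcinjN : ∀ k, k < n → ∀ m, m < n → arc k = arc m → k = m := by
    intro k hk m hm h
    have h2 : ((k : ℕ) : Fin n) = ((m : ℕ) : Fin n) := add_left_cancel h
    have h3 := congrArg Fin.val h2
    rw [Fin.val_natCast _ _, Fin.val_natCast _ _, Nat.mod_eq_of_lt hk,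
      Nat.mod_eq_of_lt hm] at h3
    exact h3
  have harcinj : ∀ k, k ≤ c → ∀ m, m ≤ c → arc k = arc m → k = m :=
    fun k hk m hm h => harcinjN k (by omega) m (by omega) h
  have hdecomp : ∀ u : Fin n, ∃ k, k < n ∧ u = arc k := by
    intro u
    refine ⟨((u - x : Fin n)).val, (u - x).isLt, ?_⟩
    show u = x + (((u - x : Fin n)).val : Fin n)
    rw [Fin.cast_val_eq_self]
    ring
  have hnbr : ∀ k, 0 < k → k < c → ∀ j : Fin n,
      (SimpleGraph.cycleGraph n).Adj (arc k) j → j = arc (k - 1) ∨ j = arc (k + 1) := by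
    intro k hk0 hkc j hja
    rw [SimpleGraph.cycleGraph_adj'] at hja
    rcases hja with h | h
    · left
      have h1 : arc k - j = 1 := by
        apply Fin.val_injective
        rw [h, hone]
      have hj : j = arc k - 1 := by rw [← h1]; ring
      rw [hj]
      show x + ((k : ℕ) : Fin n) - 1 = x + ((k - 1 : ℕ) : Fin n)
      rw [Nat.cast_sub (by omega : 1 ≤ k)]
      push_cast
      ring
    · right
      have h1 : j - arc k = 1 := by
        apply Fin.val_injective
        rw [h, hone]
      have hj : j = arc k + 1 := by rw [← h1]; ring
      rw [hj, hstep1]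
  have hstep2 : ∀ k, 0 < k → k + 1 < n → arc k ≠ y → arc (k + 1) ≠ y →
      ((arc k ∈ L → arc (k + 1) ∈ L) ∧ (arc k ∈ R → arc (k + 1) ∈ R)) := by
    intro k h0 h1 hky hk1y
    have hkx : arc k ≠ x :=
      fun h => absurd (harcinjN k (by omega) 0 (by omega) (h.trans harc0.symm)) (by omega)
    have hk1x : arc (k + 1) ≠ x :=
      fun h => absurd (harcinjN (k+1) h1 0 (by omega) (h.trans harc0.symm)) (by omega)
    have hdadj : (deletedCycle n x y).Adj (arc k) (arc (k + 1)) :=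
      ⟨hadj k, hkx, hky, hk1x, hk1y⟩
    constructor
    · intro hL'
      rcases hcover (arc (k + 1)) hk1x hk1y with h | h
      · exact h
      · exact absurd hdadj.reachable (hLR _ hL' _ h)
    · intro hR'
      rcases hcover (arc (k + 1)) hk1x hk1y with h | h
      · exact absurd hdadj.symm.reachable (hLR _ h _ hR')
      · exact h
  have hside1 : (∀ k, 0 < k → k < c → arc k ∈ L) ∨ (∀ k, 0 < k → k < c → arc k ∈ R) := by
    by_cases hc1 : c ≤ 1
    · left; intro k h0 h1; omega
    · push_neg at hc1
      have h1x : arc 1 ≠ x :=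
        fun h => absurd (harcinjN 1 (by omega) 0 (by omega) (h.trans harc0.symm)) (by omega)
      have h1y : arc 1 ≠ y :=
        fun h => absurd (harcinjN 1 (by omega) c (by omega) (h.trans harcc.symm)) (by omega)
      have hprop : ∀ k, 0 < k → k < c →
          ((arc 1 ∈ L → arc k ∈ L) ∧ (arc 1 ∈ R → arc k ∈ R)) := by
        intro k
        induction k with
        | zero => intro h0 _; exact absurd h0 (by omega)
        | succ k ih =>
          intro _ hk1c
          rcases Nat.eq_zero_or_pos k with rfl | hkpos
          · exact ⟨fun h => h, fun h => h⟩
          · have hk := ih hkpos (by omega)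
            have hs := hstep2 k hkpos (by omega)
              (fun h => absurd (harcinjN k (by omega) c (by omega) (h.trans harcc.symm))
                (by omega))
              (fun h => absurd (harcinjN (k+1) (by omega) c (by omega) (h.trans harcc.symm))
                (by omega))
            exact ⟨fun h => hs.1 (hk.1 h), fun h => hs.2 (hk.2 h)⟩
      rcases hcover (arc 1) h1x h1y with h | h
      · left; intro k h0 h1; exact (hprop k h0 h1).1 h
      · right; intro k h0 h1; exact (hprop k h0 h1).2 h
  have hside2 : (∀ k, c < k → k < n → arc k ∈ L) ∨ (∀ k, c < k → k < n → arc k ∈ R) := by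
    by_cases hc1 : n ≤ c + 1
    · left; intro k h0 h1; omega
    · push_neg at hc1
      have hx' : arc (c + 1) ≠ x :=
        fun h => absurd (harcinjN (c+1) (by omega) 0 (by omega) (h.trans harc0.symm)) (by omega)
      have hy' : arc (c + 1) ≠ y :=
        fun h => absurd (harcinjN (c+1) (by omega) c (by omega) (h.trans harcc.symm)) (by omega)
      have hprop : ∀ k, c < k → k < n →
          ((arc (c + 1) ∈ L → arc k ∈ L) ∧ (arc (c + 1) ∈ R → arc k ∈ R)) := by
        intro k
        induction k with
        | zero => intro h0 _; exact absurd h0 (by omega)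
        | succ k ih =>
          intro hck hk1n
          rcases (by omega : k = c ∨ c < k) with rfl | hkpos
          · exact ⟨fun h => h, fun h => h⟩
          · have hk := ih hkpos (by omega)
            have hs := hstep2 k (by omega) (by omega)
              (fun h => absurd (harcinjN k (by omega) c (by omega) (h.trans harcc.symm))
                (by omega))
              (fun h => absurd (harcinjN (k+1) (by omega) c (by omega) (h.trans harcc.symm))
                (by omega))
            exact ⟨fun h => hs.1 (hk.1 h), fun h => hs.2 (hk.2 h)⟩
      rcases hcover (arc (c + 1)) hx' hy' with h | h
      · left; intro k h0 h1; exact (hprop k h0 h1).1 h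
      · right; intro k h0 h1; exact (hprop k h0 h1).2 h
  rcases hside1 with hL1 | hR1
  · -- the forward arc interior is `L`
    have hR2 : ∀ k, c < k → k < n → arc k ∈ R := by
      rcases hside2 with h2 | h2
      · exfalso
        obtain ⟨b, hb⟩ := hRne
        obtain ⟨k, hkn, rfl⟩ := hdecomp b
        rcases (by omega : k = 0 ∨ k = c ∨ (0 < k ∧ k < c) ∨ (c < k ∧ k < n))
          with rfl | rfl | hk | hk
        · exact hxR (harc0 ▸ hb)
        · exact hyR (harcc ▸ hb)
        · exact Set.disjoint_left.mp hdisj (hL1 k hk.1 hk.2) hb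
        · exact Set.disjoint_left.mp hdisj (h2 k hk.1 hk.2) hb
      · exact h2
    have hLarc' : ∀ i ∈ L, ∃ k, 0 < k ∧ k < c ∧ i = arc k := by
      intro i hi
      obtain ⟨k, hkn, rfl⟩ := hdecomp i
      rcases (by omega : k = 0 ∨ k = c ∨ (0 < k ∧ k < c) ∨ (c < k ∧ k < n))
        with rfl | rfl | hk | hk
      · exact absurd (harc0 ▸ hi) hxL
      · exact absurd (harcc ▸ hi) hyL
      · exact ⟨k, hk.1, hk.2, rfl⟩
      · exact absurd hi (Set.disjoint_right.mp hdisj (hR2 k hk.1 hk.2))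
    have hkey := key_lemma δ n K f hK x y L R hxL hyL hxR hyR hcover hLR S hSx hSy hsep
      c hc0 arc harc0 harcc (fun k _ => hadj k) harcinj hnbr hL1 hLarc'
    rw [hdist] at hkey
    linarith
  · -- the forward arc interior is `R`: swap the roles of `L` and `R`
    have hL2 : ∀ k, c < k → k < n → arc k ∈ L := by
      rcases hside2 with h2 | h2
      · exact h2
      · exfalso
        obtain ⟨b, hb⟩ := hLne
        obtain ⟨k, hkn, rfl⟩ := hdecomp b
        rcases (by omega : k = 0 ∨ k = c ∨ (0 < k ∧ k < c) ∨ (c < k ∧ k < n))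
          with rfl | rfl | hk | hk
        · exact hxL (harc0 ▸ hb)
        · exact hyL (harcc ▸ hb)
        · exact Set.disjoint_left.mp hdisj hb (hR1 k hk.1 hk.2)
        · exact Set.disjoint_left.mp hdisj hb (h2 k hk.1 hk.2)
    have hRarc' : ∀ i ∈ R, ∃ k, 0 < k ∧ k < c ∧ i = arc k := by
      intro i hi
      obtain ⟨k, hkn, rfl⟩ := hdecomp i
      rcases (by omega : k = 0 ∨ k = c ∨ (0 < k ∧ k < c) ∨ (c < k ∧ k < n))
        with rfl | rfl | hk | hk
      · exact absurd (harc0 ▸ hi) hxR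
      · exact absurd (harcc ▸ hi) hyR
      · exact ⟨k, hk.1, hk.2, rfl⟩
      · exact absurd hi (Set.disjoint_left.mp hdisj (hL2 k hk.1 hk.2))
    have hsep' : ∀ (u v : V) (p : K.skeleton.Walk u v), u ∈ f '' R → v ∈ f '' L →
        f x ∉ p.support → f y ∉ p.support → ∃ s ∈ S, s ∈ p.support := by
      intro u v p hu hv hx' hy'
      have hx'' : f x ∉ p.reverse.support := by
        rwa [SimpleGraph.Walk.support_reverse, List.mem_reverse]
      have hy'' : f y ∉ p.reverse.support := by
        rwa [SimpleGraph.Walk.support_reverse, List.mem_reverse]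
      obtain ⟨s, hs1, hs2⟩ := hsep v u p.reverse hv hu hx'' hy''
      rw [SimpleGraph.Walk.support_reverse, List.mem_reverse] at hs2
      exact ⟨s, hs1, hs2⟩
    have hLR' : ∀ u ∈ R, ∀ v ∈ L, ¬ (deletedCycle n x y).Reachable u v :=
      fun u hu v hv h => hLR v hv u hu h.symm
    have hcover' : ∀ u : Fin n, u ≠ x → u ≠ y → u ∈ R ∨ u ∈ L :=
      fun u h1 h2 => (hcover u h1 h2).symm
    have hkey := key_lemma δ n K f hK x y R L hxR hyR hxL hyL hcover' hLR' S hSx hSy hsep'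
      c hc0 arc harc0 harcc (fun k _ => hadj k) harcinj hnbr hR1 hRarc'
    rw [hdist] at hkey
    linarith
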